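/- Let θ, θ_∞ : ℝ² → ℝ be differentiable. Then pointwise 2|∇(d - d_∞)|² - |∇(θ - θ_∞)|² ≥ (1 - |2cos(θ - θ_∞) - 1|)·(|∇θ|² + |∇θ_∞|²) ≥ 0 provided cos(θ - θ_∞) ≥ 0, where d = (sin θ, cos θ)ᵀ and d_∞ = (sin θ_∞, cos θ_∞)ᵀ. -/

import Mathlib

open Real

noncomputable section

/-- Partial derivative in the first coordinate direction. -/
def pd1 (f : ℝ × ℝ → ℝ) (x : ℝ × ℝ) : ℝ := fderiv ℝ f x (1, 0)

/-- Partial derivative in the second coordinate direction. -/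
def pd2 (f : ℝ × ℝ → ℝ) (x : ℝ × ℝ) : ℝ := fderiv ℝ f x (0, 1)

/-- The Laplacian on ℝ². -/
def lap (f : ℝ × ℝ → ℝ) (x : ℝ × ℝ) : ℝ := pd1 (pd1 f) x + pd2 (pd2 f) x

lemma fderiv_sin_comp (θ : ℝ × ℝ → ℝ) (hθ : Differentiable ℝ θ) (x : ℝ × ℝ) (v : ℝ × ℝ) :
    fderiv ℝ (fun y => Real.sin (θ y)) x v = Real.cos (θ x) * fderiv ℝ θ x v := by
  have h : HasFDerivAt (fun y => Real.sin (θ y)) (Real.cos (θ x) • fderiv ℝ θ x) x :=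
    (Real.hasDerivAt_sin (θ x)).comp_hasFDerivAt x (hθ x).hasFDerivAt
  rw [h.fderiv]; simp

lemma fderiv_cos_comp (θ : ℝ × ℝ → ℝ) (hθ : Differentiable ℝ θ) (x : ℝ × ℝ) (v : ℝ × ℝ) :
    fderiv ℝ (fun y => Real.cos (θ y)) x v = -Real.sin (θ x) * fderiv ℝ θ x v := by
  have h : HasFDerivAt (fun y => Real.cos (θ y)) ((-Real.sin (θ x)) • fderiv ℝ θ x) x :=
    (Real.hasDerivAt_cos (θ x)).comp_hasFDerivAt x (hθ x).hasFDerivAt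
  rw [h.fderiv]; simp

lemma alg_lemma (a1 a2 b1 b2 cs ss ci si c : ℝ)
    (hp1 : ss ^ 2 + cs ^ 2 = 1) (hp2 : si ^ 2 + ci ^ 2 = 1)
    (hcsub : c = cs * ci + ss * si) (hcos : 0 ≤ c) (hc1 : c ≤ 1) :
    ((1 - |2 * c - 1|) * ((a1 ^ 2 + a2 ^ 2) + (b1 ^ 2 + b2 ^ 2))
      ≤ 2 * ((cs * a1 - ci * b1) ^ 2 + (-ss * a1 + si * b1) ^ 2
            + (cs * a2 - ci * b2) ^ 2 + (-ss * a2 + si * b2) ^ 2)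
        - ((a1 - b1) ^ 2 + (a2 - b2) ^ 2))
    ∧ 0 ≤ (1 - |2 * c - 1|) * ((a1 ^ 2 + a2 ^ 2) + (b1 ^ 2 + b2 ^ 2)) := by
  have habs : |2 * c - 1| ≤ 1 := abs_le.2 ⟨by linarith, by linarith⟩
  constructor
  · rw [show (2:ℝ) * ((cs * a1 - ci * b1) ^ 2 + (-ss * a1 + si * b1) ^ 2
        + (cs * a2 - ci * b2) ^ 2 + (-ss * a2 + si * b2) ^ 2)
        - ((a1 - b1) ^ 2 + (a2 - b2) ^ 2)
        = (a1 ^ 2 + a2 ^ 2 + b1 ^ 2 + b2 ^ 2) - 2 * (2 * c - 1) * (a1 * b1 + a2 * b2) by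
      rw [hcsub]
      linear_combination (2 * a1 ^ 2 + 2 * a2 ^ 2) * hp1 + (2 * b1 ^ 2 + 2 * b2 ^ 2) * hp2]
    rcases abs_cases (2 * c - 1) with ⟨h, h'⟩ | ⟨h, h'⟩ <;> rw [h] <;>
      nlinarith [sq_nonneg (a1 - b1), sq_nonneg (a2 - b2), sq_nonneg (a1 + b1), sq_nonneg (a2 + b2)]
  · have : 0 ≤ 1 - |2 * c - 1| := by linarith
    positivity

/-- With d = (sin θ, cos θ) and d_∞ = (sin θ_∞, cos θ_∞), pointwise
2|∇(d - d_∞)|² - |∇(θ - θ_∞)|² ≥ (1 - |2cos(θ - θ_∞) - 1|)(|∇θ|² + |∇θ_∞|²) ≥ 0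
provided cos(θ - θ_∞) ≥ 0. -/
theorem grad_angle_director_comparison (θ θi : ℝ × ℝ → ℝ)
    (hθ : Differentiable ℝ θ) (hθi : Differentiable ℝ θi) (x : ℝ × ℝ)
    (hcos : 0 ≤ Real.cos (θ x - θi x)) :
    ((1 - |2 * Real.cos (θ x - θi x) - 1|)
        * ((pd1 θ x ^ 2 + pd2 θ x ^ 2) + (pd1 θi x ^ 2 + pd2 θi x ^ 2))
      ≤ 2 * (pd1 (fun y => Real.sin (θ y) - Real.sin (θi y)) x ^ 2
            + pd1 (fun y => Real.cos (θ y) - Real.cos (θi y)) x ^ 2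
            + pd2 (fun y => Real.sin (θ y) - Real.sin (θi y)) x ^ 2
            + pd2 (fun y => Real.cos (θ y) - Real.cos (θi y)) x ^ 2)
        - (pd1 (fun y => θ y - θi y) x ^ 2 + pd2 (fun y => θ y - θi y) x ^ 2))
    ∧ 0 ≤ (1 - |2 * Real.cos (θ x - θi x) - 1|)
        * ((pd1 θ x ^ 2 + pd2 θ x ^ 2) + (pd1 θi x ^ 2 + pd2 θi x ^ 2)) := by
  have hds : Differentiable ℝ fun y => Real.sin (θ y) := Real.differentiable_sin.comp hθ
  have hdsi : Differentiable ℝ fun y => Real.sin (θi y) := Real.differentiable_sin.comp hθi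
  have hdc : Differentiable ℝ fun y => Real.cos (θ y) := Real.differentiable_cos.comp hθ
  have hdci : Differentiable ℝ fun y => Real.cos (θi y) := Real.differentiable_cos.comp hθi
  have key : ∀ v : ℝ × ℝ,
      fderiv ℝ (fun y => Real.sin (θ y) - Real.sin (θi y)) x v
        = Real.cos (θ x) * fderiv ℝ θ x v - Real.cos (θi x) * fderiv ℝ θi x v ∧
      fderiv ℝ (fun y => Real.cos (θ y) - Real.cos (θi y)) x v
        = -Real.sin (θ x) * fderiv ℝ θ x v + Real.sin (θi x) * fderiv ℝ θi x v ∧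
      fderiv ℝ (fun y => θ y - θi y) x v = fderiv ℝ θ x v - fderiv ℝ θi x v := by
    intro v
    refine ⟨?_, ?_, ?_⟩
    · rw [fderiv_fun_sub (hds x) (hdsi x)]
      simp only [ContinuousLinearMap.sub_apply, fderiv_sin_comp θ hθ, fderiv_sin_comp θi hθi]
    · rw [fderiv_fun_sub (hdc x) (hdci x)]
      simp only [ContinuousLinearMap.sub_apply, fderiv_cos_comp θ hθ, fderiv_cos_comp θi hθi]
      ring
    · rw [fderiv_fun_sub (hθ x) (hθi x)]; rfl
  obtain ⟨e1, e2, e3⟩ := key (1, 0)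
  obtain ⟨f1, f2, f3⟩ := key (0, 1)
  simp only [pd1, pd2, e1, e2, e3, f1, f2, f3]
  exact alg_lemma _ _ _ _ _ _ _ _ _ (Real.sin_sq_add_cos_sq _) (Real.sin_sq_add_cos_sq _)
    (Real.cos_sub _ _) hcos (Real.cos_le_one _)
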